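/- arXiv:1510.06302 — 9 statements merged into one kernel-verified Lean document; each statement's English description precedes it below -/
import Mathlib

section
/- Let K and L be fields, U a K-vector space, V an L-vector space, T a group, κ : T → Kˣ and λ : T → Lˣ group homomorphisms, and α : U → V a nonzero additive map. Suppose there is ε ∈ {1, −1} such that α(κ(t) • u) = λ(t)^ε • α(u) for all t ∈ T and u ∈ U (ε = 1 is the T-covariant case, ε = −1 the T-contravariant case). Then for every t ∈ T, κ(t) = 1 if and only if λ(t) = 1; that is, the kernels of κ and λ coincide, and both equal the kernel of the homomorphism ρ = κ × λ : T → Kˣ × Lˣ. -/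
/-- Let `K`, `L` be fields, `U` a `K`-vector space, `V` an `L`-vector
space, `T` a group, `κ : T → Kˣ`, `λ : T → Lˣ` group homomorphisms and `α : U → V` a
nonzero additive map which is `T`-covariant or `T`-contravariant, i.e.
`α (κ t • u) = (λ t) ^ ε • α u` for some `ε ∈ {1, -1}`.  Then `κ t = 1 ↔ λ t = 1` for
every `t`, i.e. the kernels of `κ`, `λ` and of `ρ = κ × λ` all coincide. -/
theorem stmt2 {K L : Type*} [Field K] [Field L]
    {U V : Type*} [AddCommGroup U] [Module K U] [AddCommGroup V] [Module L V]
    {T : Type*} [Group T] (κ : T →* Kˣ) (lam : T →* Lˣ)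
    (α : U → V) (hadd : ∀ u u' : U, α (u + u') = α u + α u')
    (hne : ∃ u : U, α u ≠ 0)
    (hcov : ∃ ε : ℤ, (ε = 1 ∨ ε = -1) ∧
      ∀ (t : T) (u : U), α (((κ t : Kˣ) : K) • u) = ((lam t ^ ε : Lˣ) : L) • α u) :
    (∀ t : T, κ t = 1 ↔ lam t = 1) ∧
    κ.ker = lam.ker ∧ κ.ker = (κ.prod lam).ker := by
  obtain ⟨ε, hε, hc⟩ := hcov
  have h0 : α 0 = 0 := by
    have := hadd 0 0; simpa using this
  have hsub : ∀ u u' : U, α (u - u') = α u - α u' := by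
    intro u u'
    have h := hadd (u - u') u'
    rw [sub_add_cancel] at h
    rw [h]; abel
  have key : ∀ t : T, κ t = 1 ↔ lam t = 1 := by
    intro t
    constructor
    · intro ht
      obtain ⟨u, hu⟩ := hne
      have h1 : ((lam t ^ ε : Lˣ) : L) • α u = α u := by
        have := hc t u
        rw [ht] at this
        simpa using this.symm
      have h2 : ((lam t ^ ε : Lˣ) : L) = 1 := by
        by_contra h
        have hz : (((lam t ^ ε : Lˣ) : L) - 1) • α u = 0 := by
          rw [sub_smul, one_smul, h1, sub_self]
        rcases smul_eq_zero.mp hz with h' | h'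
        · exact h (sub_eq_zero.mp h')
        · exact hu h'
      have h3 : lam t ^ ε = 1 := Units.ext (by simpa using h2)
      rcases hε with rfl | rfl
      · simpa using h3
      · have := inv_eq_one.mp (by simpa [zpow_neg] using h3)
        exact this
    · intro ht
      by_contra hk
      have hcne : ((κ t : Kˣ) : K) ≠ 1 := by
        intro h; exact hk (Units.ext (by simpa using h))
      have hall : ∀ u : U, α (((κ t : Kˣ) : K) • u) = α u := by
        intro u; rw [hc t u, ht]; simp
      obtain ⟨u, hu⟩ := hne
      set c : K := ((κ t : Kˣ) : K) with hcdef
      have hd : c - 1 ≠ 0 := sub_ne_zero.mpr hcne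
      have hz : α u = 0 := by
        have h4 : α ((c - 1) • ((c - 1)⁻¹ • u)) = 0 := by
          rw [sub_smul, one_smul, hsub, hall, sub_self]
        rwa [smul_smul, mul_inv_cancel₀ hd, one_smul] at h4
      exact hu hz
  refine ⟨key, ?_, ?_⟩
  · ext t
    simp [MonoidHom.mem_ker, key t]
  · ext t
    simp [MonoidHom.mem_ker, Prod.ext_iff, key t, MonoidHom.prod_apply]
end

section
/- Let K and L be fields, U a K-vector space, V an L-vector space, and α : U → V a nonzero additive map. Let F = {(k, ℓ) ∈ K × L : α(k • u) = ℓ • α(u) for all u ∈ U}. Then F is a subring of the product ring K × L; for every (k, ℓ) ∈ F one has k = 0 if and only if ℓ = 0; and for every (k, ℓ) ∈ F with k ≠ 0, also (k⁻¹, ℓ⁻¹) ∈ F. Consequently F, with its induced ring structure, is a field. -/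
set_option synthInstance.maxHeartbeats 1000000
set_option maxHeartbeats 1000000


/-- Let `K`, `L` be fields, `U` a `K`-vector space, `V` an `L`-vector
space and `α : U → V` a nonzero additive map.  Then
`F = {(k, ℓ) : K × L | ∀ u, α (k • u) = ℓ • α u}` is a subring of the product ring
`K × L`, for `(k, ℓ) ∈ F` one has `k = 0 ↔ ℓ = 0`, for `(k, ℓ) ∈ F` with `k ≠ 0` also
`(k⁻¹, ℓ⁻¹) ∈ F`, and `F` (with the induced ring structure) is a field. -/
theorem stmt3 {K L : Type*} [Field K] [Field L]
    {U V : Type*} [AddCommGroup U] [Module K U] [AddCommGroup V] [Module L V]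
    (α : U → V) (hadd : ∀ u u' : U, α (u + u') = α u + α u')
    (hne : ∃ u : U, α u ≠ 0) :
    ∃ S : Subring (K × L),
      (S : Set (K × L)) = {p : K × L | ∀ u : U, α (p.1 • u) = p.2 • α u} ∧
      (∀ p ∈ S, p.1 = 0 ↔ p.2 = 0) ∧
      (∀ p : K × L, p ∈ S → p.1 ≠ 0 → (p.1⁻¹, p.2⁻¹) ∈ S) ∧
      IsField S := by
  have h0 : α 0 = 0 := by
    have h := hadd 0 0
    rw [add_zero] at h
    exact (left_eq_add.mp h)
  have hneg : ∀ u : U, α (-u) = -α u := by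
    intro u
    have h := hadd u (-u)
    rw [add_neg_cancel, h0] at h
    exact eq_neg_of_add_eq_zero_right h.symm
  set F : Set (K × L) := {p : K × L | ∀ u : U, α (p.1 • u) = p.2 • α u} with hF
  have hzero : ∀ p ∈ F, p.1 = 0 ↔ p.2 = 0 := by
    intro p hp
    obtain ⟨u0, hu0⟩ := hne
    constructor
    · intro hk
      have h := hp u0
      rw [hk, zero_smul, h0] at h
      rcases smul_eq_zero.mp h.symm with hl | hα
      · exact hl
      · exact absurd hα hu0
    · intro hl
      by_contra hk
      have h := hp (p.1⁻¹ • u0)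
      rw [hl, zero_smul, smul_smul, mul_inv_cancel₀ hk, one_smul] at h
      exact hu0 h
  have hinv : ∀ p ∈ F, p.1 ≠ 0 → (p.1⁻¹, p.2⁻¹) ∈ F := by
    intro p hp hk u
    have hl : p.2 ≠ 0 := fun h => hk ((hzero p hp).mpr h)
    have h := hp (p.1⁻¹ • u)
    rw [smul_smul, mul_inv_cancel₀ hk, one_smul] at h
    show α (p.1⁻¹ • u) = p.2⁻¹ • α u
    calc α (p.1⁻¹ • u) = p.2⁻¹ • (p.2 • α (p.1⁻¹ • u)) := by
          rw [smul_smul, inv_mul_cancel₀ hl, one_smul]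
      _ = p.2⁻¹ • α u := by rw [← h]
  let S : Subring (K × L) := {
    carrier := F
    one_mem' := by intro u; simp
    mul_mem' := by
      intro p q hp hq u
      simp only [Prod.fst_mul, Prod.snd_mul, mul_smul]
      rw [hp (q.1 • u), hq u]
    zero_mem' := by intro u; simp [h0]
    add_mem' := by
      intro p q hp hq u
      show α ((p.1 + q.1) • u) = (p.2 + q.2) • α u
      rw [add_smul, add_smul, hadd, hp, hq]
    neg_mem' := by
      intro p hp u
      show α ((-p.1) • u) = (-p.2) • α u
      rw [neg_smul, neg_smul, hneg, hp] }
  refine ⟨S, rfl, hzero, hinv, ?_, mul_comm, ?_⟩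
  · exact ⟨0, 1, fun h => (zero_ne_one : (0:K) ≠ 1) (congrArg (Prod.fst ∘ Subtype.val) h)⟩
  · rintro ⟨p, hp⟩ hne'
    have hk : p.1 ≠ 0 := by
      intro hk
      apply hne'
      have hl := (hzero p hp).mp hk
      ext
      · exact hk
      · exact hl
    refine ⟨⟨(p.1⁻¹, p.2⁻¹), hinv p hp hk⟩, ?_⟩
    ext
    · exact mul_inv_cancel₀ hk
    · exact mul_inv_cancel₀ fun h => hk ((hzero p hp).mpr h)
end

section
/- Let K, L, M be fields, let U, V, W be vector spaces over K, L, M respectively, let T be a group, and let κ : T → Kˣ, λ : T → Lˣ, μ : T → Mˣ be group homomorphisms. Let β : U × V → W be a nonzero bi-additive map which is plus-or-minus-T-covariant: there exist ε_K, ε_L, ε_M ∈ {1, −1} such that β(κ(t)^{ε_K} • u, λ(t)^{ε_L} • v) = μ(t)^{ε_M} • β(u, v) for all t ∈ T, u ∈ U, v ∈ V. Then ker κ ∩ ker λ = ker κ ∩ ker μ = ker κ ∩ ker λ ∩ ker μ; that is, for every t ∈ T with κ(t) = 1, one has λ(t) = 1 if and only if μ(t) = 1. -/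
/-- Let `K, L, M` be fields, `U, V, W` vector spaces over them,
`T` a group and `κ, λ, μ` group homomorphisms of `T` into `Kˣ, Lˣ, Mˣ`.  Let
`β : U × V → W` be a nonzero bi-additive map which is plus-or-minus-`T`-covariant:
`β ((κ t)^{ε_K} • u, (λ t)^{ε_L} • v) = (μ t)^{ε_M} • β (u, v)` for some signs
`ε_K, ε_L, ε_M ∈ {1, -1}`.  Then `ker κ ∩ ker λ = ker κ ∩ ker μ
= ker κ ∩ ker λ ∩ ker μ`; i.e. for `t` with `κ t = 1` one has `λ t = 1 ↔ μ t = 1`. -/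
theorem stmt5 {K L M : Type*} [Field K] [Field L] [Field M]
    {U V W : Type*} [AddCommGroup U] [Module K U] [AddCommGroup V] [Module L V]
    [AddCommGroup W] [Module M W]
    {T : Type*} [Group T] (κ : T →* Kˣ) (lam : T →* Lˣ) (mu : T →* Mˣ)
    (β : U → V → W)
    (haddl : ∀ (u u' : U) (v : V), β (u + u') v = β u v + β u' v)
    (haddr : ∀ (u : U) (v v' : V), β u (v + v') = β u v + β u v')
    (hne : ∃ (u : U) (v : V), β u v ≠ 0)
    (hcov : ∃ εK εL εM : ℤ, (εK = 1 ∨ εK = -1) ∧ (εL = 1 ∨ εL = -1) ∧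
      (εM = 1 ∨ εM = -1) ∧
      ∀ (t : T) (u : U) (v : V),
        β (((κ t ^ εK : Kˣ) : K) • u) (((lam t ^ εL : Lˣ) : L) • v)
          = ((mu t ^ εM : Mˣ) : M) • β u v) :
    (∀ t : T, κ t = 1 → (lam t = 1 ↔ mu t = 1)) ∧
    κ.ker ⊓ lam.ker = κ.ker ⊓ mu.ker ∧
    κ.ker ⊓ lam.ker = κ.ker ⊓ lam.ker ⊓ mu.ker := by
  obtain ⟨εK, εL, εM, hK, hL, hM, hcov⟩ := hcov
  obtain ⟨u0, v0, h0⟩ := hne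
  have hsubr : ∀ (u : U) (v v' : V), β u (v - v') = β u v - β u v' := by
    intro u v v'
    have := haddr u (v - v') v'
    rw [sub_add_cancel] at this
    exact eq_sub_of_add_eq this.symm
  have main : ∀ t : T, κ t = 1 → (lam t = 1 ↔ mu t = 1) := by
    intro t hκ
    have hκ1 : ((κ t ^ εK : Kˣ) : K) = 1 := by rw [hκ]; simp
    have hcov' : ∀ (u : U) (v : V),
        β u (((lam t ^ εL : Lˣ) : L) • v) = ((mu t ^ εM : Mˣ) : M) • β u v := by
      intro u v
      have := hcov t u v
      rwa [hκ1, one_smul] at this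
    constructor
    · intro hlam_
      have hlam_1 : ((lam t ^ εL : Lˣ) : L) = 1 := by rw [hlam_]; simp
      have h := hcov' u0 v0
      rw [hlam_1, one_smul] at h
      have : (((mu t ^ εM : Mˣ) : M) - 1) • β u0 v0 = 0 := by
        rw [sub_smul, one_smul, ← h, sub_self]
      have hm1 : ((mu t ^ εM : Mˣ) : M) = 1 := by
        rcases smul_eq_zero.mp this with h' | h'
        · exact sub_eq_zero.mp h'
        · exact absurd h' h0
      have : (mu t ^ εM : Mˣ) = 1 := Units.ext (by simpa using hm1)
      rcases hM with rfl | rfl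
      · simpa using this
      · simpa [zpow_neg, inv_eq_one] using this
    · intro hmu_
      have hmu_1 : ((mu t ^ εM : Mˣ) : M) = 1 := by rw [hmu_]; simp
      set l : L := ((lam t ^ εL : Lˣ) : L) with hl
      have hcov'' : ∀ (u : U) (v : V), β u (l • v) = β u v := by
        intro u v; rw [hcov', hmu_1, one_smul]
      have hc : ∀ (u : U) (v : V), β u ((l - 1) • v) = 0 := by
        intro u v
        rw [sub_smul, one_smul, hsubr, hcov'', sub_self]
      have hl1 : l = 1 := by
        by_contra hne1
        have hc0 : l - 1 ≠ 0 := sub_ne_zero.mpr hne1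
        have := hc u0 ((l - 1)⁻¹ • v0)
        rw [smul_smul, mul_inv_cancel₀ hc0, one_smul] at this
        exact h0 this
      have : (lam t ^ εL : Lˣ) = 1 := Units.ext (by rw [← hl, hl1, Units.val_one])
      rcases hL with rfl | rfl
      · simpa using this
      · simpa [zpow_neg, inv_eq_one] using this
  refine ⟨main, ?_, ?_⟩
  · ext t
    simp only [Subgroup.mem_inf, MonoidHom.mem_ker]
    exact ⟨fun ⟨h1, h2⟩ => ⟨h1, (main t h1).mp h2⟩,
      fun ⟨h1, h2⟩ => ⟨h1, (main t h1).mpr h2⟩⟩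
  · ext t
    simp only [Subgroup.mem_inf, MonoidHom.mem_ker]
    exact ⟨fun ⟨h1, h2⟩ => ⟨⟨h1, h2⟩, (main t h1).mp h2⟩, fun ⟨⟨h1, h2⟩, _⟩ => ⟨h1, h2⟩⟩
end

section
/- Let K, L, M be fields, let U, V, W be vector spaces over K, L, M respectively, and let β : U × V → W be a nonzero bi-additive map. Let F = {(k, m) ∈ K × M : β(k • u, v) = m • β(u, v) for all u ∈ U, v ∈ V}. Then F is a subring of the product ring K × M; for every (k, m) ∈ F one has k = 0 if and only if m = 0; and for every (k, m) ∈ F with k ≠ 0, also (k⁻¹, m⁻¹) ∈ F. Consequently F, with its induced ring structure, is a field. -/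
set_option synthInstance.maxHeartbeats 1000000
set_option maxHeartbeats 1000000


/-- Let `K, L, M` be fields, `U, V, W` vector spaces over them and
`β : U × V → W` a nonzero bi-additive map.  Then
`F = {(k, m) : K × M | ∀ u v, β (k • u) v = m • β u v}` is a subring of the product
ring `K × M`, for `(k, m) ∈ F` one has `k = 0 ↔ m = 0`, for `(k, m) ∈ F` with `k ≠ 0`
also `(k⁻¹, m⁻¹) ∈ F`, and `F` (with the induced ring structure) is a field. -/
theorem stmt6 {K L M : Type*} [Field K] [Field L] [Field M]
    {U V W : Type*} [AddCommGroup U] [Module K U] [AddCommGroup V] [Module L V]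
    [AddCommGroup W] [Module M W]
    (β : U → V → W)
    (haddl : ∀ (u u' : U) (v : V), β (u + u') v = β u v + β u' v)
    (haddr : ∀ (u : U) (v v' : V), β u (v + v') = β u v + β u v')
    (hne : ∃ (u : U) (v : V), β u v ≠ 0) :
    ∃ S : Subring (K × M),
      (S : Set (K × M)) =
        {p : K × M | ∀ (u : U) (v : V), β (p.1 • u) v = p.2 • β u v} ∧
      (∀ p ∈ S, p.1 = 0 ↔ p.2 = 0) ∧
      (∀ p : K × M, p ∈ S → p.1 ≠ 0 → (p.1⁻¹, p.2⁻¹) ∈ S) ∧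
      IsField S := by
  have hzero : ∀ v : V, β 0 v = 0 := by
    intro v
    have h := haddl 0 0 v
    rw [add_zero] at h
    have h2 : β 0 v + β 0 v = β 0 v + 0 := by rw [add_zero, ← h]
    exact add_left_cancel h2
  have hneg : ∀ (u : U) (v : V), β (-u) v = -β u v := by
    intro u v
    have h := haddl u (-u) v
    rw [add_neg_cancel, hzero] at h
    exact (neg_eq_of_add_eq_zero_right h.symm).symm
  let S : Subring (K × M) := {
    carrier := {p : K × M | ∀ (u : U) (v : V), β (p.1 • u) v = p.2 • β u v}
    one_mem' := by intro u v; simp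
    mul_mem' := by
      intro p q hp hq u v
      simp only [Prod.fst_mul, Prod.snd_mul, mul_smul]
      rw [hp, hq, smul_comm]  -- maybe not needed
    add_mem' := by
      intro p q hp hq u v
      simp only [Prod.fst_add, Prod.snd_add, add_smul]
      rw [haddl, hp, hq]
    zero_mem' := by
      intro u v
      simp [hzero]
    neg_mem' := by
      intro p hp u v
      simp only [Prod.fst_neg, Prod.snd_neg, neg_smul]
      rw [hneg, hp]
  }
  have hiff : ∀ p ∈ S, p.1 = 0 ↔ p.2 = 0 := by
    intro p hp
    obtain ⟨u0, v0, hβ⟩ := hne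
    constructor
    · intro hk
      have h := hp u0 v0
      rw [hk, zero_smul, hzero] at h
      rcases smul_eq_zero.mp h.symm with h' | h'
      · exact h'
      · exact absurd h' hβ
    · intro hm
      by_contra hk
      have h := hp (p.1⁻¹ • u0) v0
      rw [hm, zero_smul, smul_smul, mul_inv_cancel₀ hk, one_smul] at h
      exact hβ h
  have hinv : ∀ p : K × M, p ∈ S → p.1 ≠ 0 → (p.1⁻¹, p.2⁻¹) ∈ S := by
    intro p hp hk u v
    have hm : p.2 ≠ 0 := fun h => hk ((hiff p hp).mpr h)
    have h := hp (p.1⁻¹ • u) v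
    rw [smul_smul, mul_inv_cancel₀ hk, one_smul] at h
    show β (p.1⁻¹ • u) v = p.2⁻¹ • β u v
    rw [eq_inv_smul_iff₀ hm]
    exact h.symm
  refine ⟨S, rfl, hiff, hinv, ?_, mul_comm, ?_⟩
  · refine ⟨0, 1, fun h => ?_⟩
    have := congrArg (fun x : S => (x : K × M).1) h
    exact zero_ne_one (α := K) this
  · intro a ha
    have h1 : (a : K × M).1 ≠ 0 := by
      intro h
      exact ha (Subtype.ext (Prod.ext h ((hiff _ a.2).mp h)))
    have h2 : (a : K × M).2 ≠ 0 := fun h => h1 ((hiff _ a.2).mpr h)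
    refine ⟨⟨((a : K × M).1⁻¹, (a : K × M).2⁻¹), hinv _ a.2 h1⟩, ?_⟩
    apply Subtype.ext
    show (a : K × M) * ((a : K × M).1⁻¹, (a : K × M).2⁻¹) = 1
    ext
    · exact mul_inv_cancel₀ h1
    · exact mul_inv_cancel₀ h2
end

section
/- Let K be a field, G = SL₂(K), and V a G-module. Define the ascending series Z₀ = 0 and Z_{j+1} = {v ∈ V : [u', v] ∈ Z_j for all u' ∈ U} for j ≥ 0. Then each Z_j is a B-invariant subgroup of V, and for every n ≥ 2 the smallest G-invariant subgroup of V containing Z₁ ∩ w·Z_{n−1} is contained in Z_{n−1}. Consequently, if V is G-irreducible (its only G-invariant subgroups are 0 and V) and Z_{n−1} ≠ V, then Z₁ ∩ w·Z_{n−1} = 0. -/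
/-!
Conjugating `u_λ` by an upper triangular `b` gives another `u_μ`, so each `Z_j` is `B`-stable.
For `v = w • z ∈ Z₁` with `z ∈ Z_m`, an element `g ∉ B` has a Bruhat decomposition
`g = b w u_λ`; since `u_λ` fixes `v ∈ Z₁`, we get `g • v = (b w²) • z` with `b w² ∈ B`, hence
`g • v ∈ Z_m`. The `G`-invariant subgroup generated by `Z₁ ∩ w • Z_m` thus lies in `Z_m`, and
irreducibility forces it to be `0` when `Z_m ≠ V`.
-/

/-- The unipotent element `u_λ = [[1, λ], [0, 1]]` of `SL₂(K)`. -/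
def uu (K : Type*) [Field K] (l : K) : Matrix.SpecialLinearGroup (Fin 2) K :=
  ⟨!![1, l; 0, 1], by simp [Matrix.det_fin_two_of]⟩

/-- The Weyl element `w = [[0, 1], [-1, 0]]` of `SL₂(K)`. -/
def ww (K : Type*) [Field K] : Matrix.SpecialLinearGroup (Fin 2) K :=
  ⟨!![0, 1; -1, 0], by simp [Matrix.det_fin_two_of]⟩

/-- The ascending series `Z₀ = 0`, `Z_{j+1} = {v | [u', v] ∈ Z_j for all u' ∈ U}`,
where `U = {u_λ : λ ∈ K}` and `[g, v] = g • v - v`. -/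
def Zs (K : Type*) [Field K] (V : Type*) [AddCommGroup V]
    [DistribMulAction (Matrix.SpecialLinearGroup (Fin 2) K) V] :
    ℕ → AddSubgroup V
  | 0 => ⊥
  | j + 1 =>
    { carrier := {v | ∀ l : K, uu K l • v - v ∈ Zs K V j}
      zero_mem' := by
        intro l
        simpa using (Zs K V j).zero_mem
      add_mem' := by
        intro a b ha hb l
        have h : uu K l • (a + b) - (a + b) = (uu K l • a - a) + (uu K l • b - b) := by
          rw [smul_add]; abel
        rw [h]; exact (Zs K V j).add_mem (ha l) (hb l)
      neg_mem' := by
        intro a ha l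
        have h : uu K l • (-a) - (-a) = -(uu K l • a - a) := by
          rw [smul_neg]; abel
        rw [h]; exact (Zs K V j).neg_mem (ha l) }

open Matrix MatrixGroups

lemma AddSubgroup.smul_mem_closure {M A : Type*} [Monoid M] [AddGroup A] [DistribMulAction M A]
    {s : Set A} {a : M} (hs : ∀ x ∈ s, a • x ∈ s) {x : A} (hx : x ∈ closure s) :
    a • x ∈ closure s :=
  (closure_le (K := (closure s).comap (DistribSMul.toAddMonoidHom A a))).2
    (fun y hy => subset_closure (hs y hy)) hx

section

variable {K : Type*} [Field K]

lemma coe_uu (l : K) : (uu K l : Matrix (Fin 2) (Fin 2) K) = !![1, l; 0, 1] := rfl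

lemma coe_ww : (ww K : Matrix (Fin 2) (Fin 2) K) = !![0, 1; -1, 0] := rfl

lemma det_eq_one_fin_two (g : SL(2, K)) : g 0 0 * g 1 1 - g 0 1 * g 1 0 = 1 := by
  rw [← det_fin_two]
  exact g.det_coe

lemma uu_mul_of_lower_left_eq_zero {g : SL(2, K)} (hg : g 1 0 = 0) (l : K) :
    uu K l * g = g * uu K (l * g 1 1 ^ 2) := by
  have had : g 0 0 * g 1 1 = 1 := by simpa [hg] using det_eq_one_fin_two g
  apply Matrix.SpecialLinearGroup.ext
  simp [coe_uu, Fin.forall_fin_two, mul_apply, hg]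
  linear_combination (-(l * g 1 1)) * had

lemma ww_mul_ww_lower_left_eq_zero : (ww K * ww K) 1 0 = 0 := by
  simp [coe_ww]

lemma exists_eq_mul_ww_mul_uu {g : SL(2, K)} (hc : g 1 0 ≠ 0) :
    ∃ b : SL(2, K), b 1 0 = 0 ∧ ∃ l : K, g = b * ww K * uu K l := by
  let b : SL(2, K) := ⟨!![-(g 1 0)⁻¹, -g 0 0; 0, -g 1 0], by simp [det_fin_two_of, hc]⟩
  have coe_b : (b : Matrix (Fin 2) (Fin 2) K) = !![-(g 1 0)⁻¹, -g 0 0; 0, -g 1 0] := rfl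
  refine ⟨b, rfl, g 1 1 / g 1 0, ?_⟩
  apply Matrix.SpecialLinearGroup.ext
  simp [Fin.forall_fin_two, mul_apply, coe_b, coe_ww, coe_uu]
  field_simp
  exact ⟨by linear_combination -det_eq_one_fin_two g, trivial⟩

variable {V : Type*} [AddCommGroup V] [DistribMulAction SL(2, K) V]

@[simp]
lemma Zs_zero : Zs K V 0 = ⊥ := rfl

lemma mem_Zs_succ {j : ℕ} {v : V} : v ∈ Zs K V (j + 1) ↔ ∀ l : K, uu K l • v - v ∈ Zs K V j :=
  Iff.rfl

lemma mem_Zs_one {v : V} : v ∈ Zs K V 1 ↔ ∀ l : K, uu K l • v = v :=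
  forall_congr' fun _ => AddSubgroup.mem_bot.trans sub_eq_zero

lemma Zs_mono : Monotone (Zs K V) := by
  refine monotone_nat_of_le_succ fun j => ?_
  induction j with
  | zero => exact bot_le
  | succ j ih => exact fun v hv => mem_Zs_succ.2 fun l => ih (mem_Zs_succ.1 hv l)

lemma smul_mem_Zs_of_lower_left_eq_zero {g : SL(2, K)} (hg : g 1 0 = 0) {j : ℕ} {v : V}
    (hv : v ∈ Zs K V j) : g • v ∈ Zs K V j := by
  induction j generalizing v with
  | zero => simp_all
  | succ j ih =>
    refine mem_Zs_succ.2 fun l => ?_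
    rw [← mul_smul, uu_mul_of_lower_left_eq_zero hg, mul_smul, ← smul_sub]
    exact ih (mem_Zs_succ.1 hv _)

lemma smul_ww_smul_mem_Zs {m : ℕ} {z : V} (hz : z ∈ Zs K V m) (hv : ww K • z ∈ Zs K V 1)
    (g : SL(2, K)) : g • ww K • z ∈ Zs K V m := by
  rcases Nat.eq_zero_or_pos m with rfl | hm
  · simp_all
  by_cases hc : g 1 0 = 0
  · exact smul_mem_Zs_of_lower_left_eq_zero hc (Zs_mono hm hv)
  obtain ⟨b, hb, l, rfl⟩ := exists_eq_mul_ww_mul_uu hc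
  rw [mul_smul, mem_Zs_one.1 hv l, mul_smul, ← mul_smul (ww K)]
  exact smul_mem_Zs_of_lower_left_eq_zero hb
    (smul_mem_Zs_of_lower_left_eq_zero ww_mul_ww_lower_left_eq_zero hz)

end

theorem stmt8_general {K : Type*} [Field K] {V : Type*} [AddCommGroup V]
    [DistribMulAction (Matrix.SpecialLinearGroup (Fin 2) K) V]
    (n : ℕ) :
    (∀ (j : ℕ) (g : Matrix.SpecialLinearGroup (Fin 2) K),
      (g : Matrix (Fin 2) (Fin 2) K) 1 0 = 0 →
      ∀ v ∈ Zs K V j, g • v ∈ Zs K V j) ∧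
    (AddSubgroup.closure {x : V | ∃ g : Matrix.SpecialLinearGroup (Fin 2) K,
        ∃ v, (v ∈ Zs K V 1 ∧ ∃ z ∈ Zs K V (n - 1), v = ww K • z) ∧ x = g • v}
      ≤ Zs K V (n - 1)) ∧
    ((∀ W : AddSubgroup V,
        (∀ (g : Matrix.SpecialLinearGroup (Fin 2) K), ∀ v ∈ W, g • v ∈ W) →
        W = ⊥ ∨ W = ⊤) →
      Zs K V (n - 1) ≠ ⊤ →
      ∀ v ∈ Zs K V 1, (∃ z ∈ Zs K V (n - 1), v = ww K • z) → v = 0) := by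
  set S : Set V := {x : V | ∃ g : Matrix.SpecialLinearGroup (Fin 2) K,
      ∃ v, (v ∈ Zs K V 1 ∧ ∃ z ∈ Zs K V (n - 1), v = ww K • z) ∧ x = g • v}
  have hS : AddSubgroup.closure S ≤ Zs K V (n - 1) := by
    rw [AddSubgroup.closure_le]
    rintro _ ⟨g, _, ⟨hv, z, hz, rfl⟩, rfl⟩
    exact smul_ww_smul_mem_Zs hz hv g
  refine ⟨fun _ _ hg _ hv => smul_mem_Zs_of_lower_left_eq_zero hg hv, hS, ?_⟩
  intro hirr hne v hv hvz
  have hinv (g : SL(2, K)) (x : V) (hx : x ∈ AddSubgroup.closure S) :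
      g • x ∈ AddSubgroup.closure S :=
    AddSubgroup.smul_mem_closure
      (by rintro _ ⟨g', v', hv', rfl⟩; exact ⟨g * g', v', hv', (mul_smul g g' v').symm⟩) hx
  have hvS : v ∈ AddSubgroup.closure S :=
    AddSubgroup.subset_closure ⟨1, v, ⟨hv, hvz⟩, (one_smul _ v).symm⟩
  rcases hirr _ hinv with hbot | htop
  · simpa [hbot] using hvS
  · exact absurd (top_le_iff.1 (htop ▸ hS)) hne

/-- Each `Z_j` is invariant under the Borel subgroup
`B = N_G(U)` of upper triangular matrices; for `n ≥ 2`, the smallest `G`-invariant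
subgroup of `V` containing `Z₁ ∩ w·Z_{n-1}` is contained in `Z_{n-1}`; hence if `V`
is `G`-irreducible and `Z_{n-1} ≠ V`, then `Z₁ ∩ w·Z_{n-1} = 0`. -/
theorem stmt8 {K : Type*} [Field K] {V : Type*} [AddCommGroup V]
    [DistribMulAction (Matrix.SpecialLinearGroup (Fin 2) K) V]
    (n : ℕ) (hn : 2 ≤ n) :
    (∀ (j : ℕ) (g : Matrix.SpecialLinearGroup (Fin 2) K),
      (g : Matrix (Fin 2) (Fin 2) K) 1 0 = 0 →
      ∀ v ∈ Zs K V j, g • v ∈ Zs K V j) ∧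
    (AddSubgroup.closure {x : V | ∃ g : Matrix.SpecialLinearGroup (Fin 2) K,
        ∃ v, (v ∈ Zs K V 1 ∧ ∃ z ∈ Zs K V (n - 1), v = ww K • z) ∧ x = g • v}
      ≤ Zs K V (n - 1)) ∧
    ((∀ W : AddSubgroup V,
        (∀ (g : Matrix.SpecialLinearGroup (Fin 2) K), ∀ v ∈ W, g • v ∈ W) →
        W = ⊥ ∨ W = ⊤) →
      Zs K V (n - 1) ≠ ⊤ →
      ∀ v ∈ Zs K V 1, (∃ z ∈ Zs K V (n - 1), v = ww K • z) → v = 0) :=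
  stmt8_general n
end

section
/- Let K be a field, G = SL₂(K), and V a G-module. Define Z₀ = 0 and Z_{j+1} = {v ∈ V : [u', v] ∈ Z_j for all u' ∈ U}. Fix j ≥ 2. Then the map β : U × (Z_j/Z_{j−1}) → Z_{j−1}/Z_{j−2} given by β(u', z + Z_{j−1}) = [u', z] + Z_{j−2} is well defined; it is additive in each variable (in particular β(u'u'', x) = β(u', x) + β(u'', x)); it is B-equivariant in the sense that β(g u' g⁻¹, g·x) = g·β(u', x) for all g ∈ B (B preserves each Z_j, hence acts on the quotients); and its right radical is trivial: if x ∈ Z_j/Z_{j−1} satisfies β(u', x) = 0 for all u' ∈ U, then x = 0. -/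
/-- For `j ≥ 2`, the map
`β : U × (Z_j / Z_{j-1}) → Z_{j-1} / Z_{j-2}`, `β (u', z + Z_{j-1}) = [u', z] + Z_{j-2}`
is well defined, additive in each variable, `B`-equivariant
(`β (g u' g⁻¹, g • x) = g • β (u', x)` for upper triangular `g`), and its right
radical is trivial.  Stated at the level of representatives:
(1) `[u', z] ∈ Z_{j-1}` for `z ∈ Z_j` (the map lands where stated);
(2) if `z ≡ z' mod Z_{j-1}` then `[u', z] ≡ [u', z'] mod Z_{j-2}` (well defined);
(3) additivity in the second variable mod `Z_{j-2}`;
(4) `β (u'u'', x) = β (u', x) + β (u'', x)` mod `Z_{j-2}`;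
(5) `B`-equivariance mod `Z_{j-2}`;
(6) if `[u', z] ∈ Z_{j-2}` for all `u' ∈ U` then `z ∈ Z_{j-1}` (trivial radical). -/
theorem stmt9 {K : Type*} [Field K] {V : Type*} [AddCommGroup V]
    [DistribMulAction (Matrix.SpecialLinearGroup (Fin 2) K) V]
    (j : ℕ) (hj : 2 ≤ j) :
    (∀ (l : K), ∀ z ∈ Zs K V j, uu K l • z - z ∈ Zs K V (j - 1)) ∧
    (∀ (l : K), ∀ z z' : V, z ∈ Zs K V j → z' ∈ Zs K V j →
      z - z' ∈ Zs K V (j - 1) →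
      (uu K l • z - z) - (uu K l • z' - z') ∈ Zs K V (j - 2)) ∧
    (∀ (l : K), ∀ z z' : V, z ∈ Zs K V j → z' ∈ Zs K V j →
      (uu K l • (z + z') - (z + z')) - ((uu K l • z - z) + (uu K l • z' - z'))
        ∈ Zs K V (j - 2)) ∧
    (∀ (l m : K), ∀ z ∈ Zs K V j,
      ((uu K l * uu K m) • z - z) - ((uu K l • z - z) + (uu K m • z - z))
        ∈ Zs K V (j - 2)) ∧
    (∀ g : Matrix.SpecialLinearGroup (Fin 2) K,
      (g : Matrix (Fin 2) (Fin 2) K) 1 0 = 0 →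
      ∀ (l : K), ∀ z ∈ Zs K V j,
        ((g * uu K l * g⁻¹) • (g • z) - g • z) - g • (uu K l • z - z)
          ∈ Zs K V (j - 2)) ∧
    (∀ z ∈ Zs K V j, (∀ l : K, uu K l • z - z ∈ Zs K V (j - 2)) →
      z ∈ Zs K V (j - 1)) := by
  obtain ⟨k, rfl⟩ : ∃ k, j = k + 2 := ⟨j - 2, by omega⟩
  have mem_succ : ∀ (n : ℕ) (v : V),
      v ∈ Zs K V (n + 1) ↔ ∀ l : K, uu K l • v - v ∈ Zs K V n := fun n v => Iff.rfl
  have h1 : k + 2 - 1 = k + 1 := rfl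
  have h2 : k + 2 - 2 = k := rfl
  refine ⟨?_, ?_, ?_, ?_, ?_, ?_⟩
  · intro l z hz
    exact (mem_succ (k + 1) z).mp hz l
  · intro l z z' hz hz' hd
    have h := (mem_succ k (z - z')).mp hd l
    have e : uu K l • (z - z') - (z - z') = (uu K l • z - z) - (uu K l • z' - z') := by
      rw [smul_sub]; abel
    rw [e] at h
    exact h
  · intro l z z' hz hz'
    have e : (uu K l • (z + z') - (z + z')) -
        ((uu K l • z - z) + (uu K l • z' - z')) = 0 := by
      rw [smul_add]; abel
    rw [e]; exact (Zs K V k).zero_mem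
  · intro l m z hz
    have hd : uu K m • z - z ∈ Zs K V (k + 1) := (mem_succ (k + 1) z).mp hz m
    have h := (mem_succ k _).mp hd l
    have e : uu K l • (uu K m • z - z) - (uu K m • z - z) =
        ((uu K l * uu K m) • z - z) - ((uu K l • z - z) + (uu K m • z - z)) := by
      rw [mul_smul, smul_sub]; abel
    rw [e] at h
    exact h
  · intro g hg l z hz
    have e : (g * uu K l * g⁻¹) • (g • z) - g • z - g • (uu K l • z - z) = 0 := by
      rw [smul_smul, inv_mul_cancel_right, mul_smul, smul_sub]; abel
    rw [e]; exact (Zs K V k).zero_mem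
  · intro z hz h
    exact (mem_succ k z).mpr h
end

section
/- Let K be a field, R a (not necessarily commutative) ring, and ψ : K → R an additive map such that ψ(1) = 1 and ψ(μλ²) = ψ(λ)ψ(μ)ψ(λ) for all λ, μ ∈ K. Then ψ(λⁿ) = ψ(λ)ⁿ for all λ ∈ K and all natural numbers n; more generally, for every polynomial P with integer coefficients and every λ ∈ K, ψ(P(λ)) = P(ψ(λ)), where P(ψ(λ)) is evaluated in R. -/
/-- Let `K` be a field, `R` a (not necessarily commutative) ring and
`ψ : K → R` an additive map with `ψ 1 = 1` and `ψ (μ λ²) = ψ λ * ψ μ * ψ λ` for all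
`λ, μ ∈ K`.  Then `ψ (λ ^ n) = (ψ λ) ^ n` for all `n : ℕ`, and more generally
`ψ (P (λ)) = P (ψ λ)` for every polynomial `P` with integer coefficients. -/
theorem stmt13 {K R : Type*} [Field K] [Ring R]
    (ψ : K → R) (hadd : ∀ a b : K, ψ (a + b) = ψ a + ψ b)
    (hone : ψ 1 = 1)
    (hjord : ∀ a b : K, ψ (b * a ^ 2) = ψ a * ψ b * ψ a) :
    (∀ (a : K) (n : ℕ), ψ (a ^ n) = ψ a ^ n) ∧
    (∀ (P : Polynomial ℤ) (a : K),
      ψ (Polynomial.aeval a P) = Polynomial.aeval (ψ a) P) := by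
  set φ : K →+ R := AddMonoidHom.mk' ψ hadd with hφ
  have hψφ : ∀ x, ψ x = φ x := fun x => rfl
  have hpow : ∀ (a : K) (n : ℕ), ψ (a ^ n) = ψ a ^ n := by
    intro a n
    induction n using Nat.twoStepInduction with
    | zero => simpa using hone
    | one => simp
    | more n ih _ =>
        have h : a ^ (n + 2) = a ^ n * a ^ 2 := by ring
        rw [h, hjord, ih, pow_succ, pow_succ']
  have hzsmul : ∀ (z : ℤ) (x : K), ψ (z • x) = z • ψ x := by
    intro z x
    simpa [hψφ] using map_zsmul φ z x
  refine ⟨hpow, ?_⟩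
  intro P a
  induction P using Polynomial.induction_on with
  | C z =>
      rw [Polynomial.aeval_C, Polynomial.aeval_C, algebraMap_int_eq, eq_intCast, eq_intCast]
      have h1 : (z : K) = z • (1 : K) := by simp
      rw [h1, hzsmul, hone]
      simp
  | add p q hp hq =>
      simp only [map_add, hadd, hp, hq]
  | monomial n z _ =>
      have h1 : Polynomial.aeval a (Polynomial.C z * Polynomial.X ^ (n + 1))
          = z • a ^ (n + 1) := by
        rw [map_mul, Polynomial.aeval_C, map_pow, Polynomial.aeval_X,
          zsmul_eq_mul, algebraMap_int_eq, eq_intCast]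
      rw [h1, hzsmul, hpow, map_mul, Polynomial.aeval_C, map_pow,
        Polynomial.aeval_X, zsmul_eq_mul, algebraMap_int_eq, eq_intCast]
end

section
/- Let K be a field, G = SL₂(K), and V a G-module with no 2-torsion (2v = 0 implies v = 0) on which the central involution i = −I acts trivially. Suppose V = L ⊕ C ⊕ w·L is an internal direct sum of subgroups such that: u fixes L pointwise; w·C = C; [u, c'] ∈ L for all c' ∈ C; and [u, v] ∈ L ⊕ C for all v ∈ V. For a ∈ L write u·(w·a) = w·a + c(a) + ℓ(a) with c(a) ∈ C and ℓ(a) ∈ L (this decomposition exists and is unique, and c and ℓ are additive). Then for all a ∈ L: ℓ(a) = a; w·c(a) = −c(a); c(a) = 0 implies a = 0 (c is injective); and [u, c(a)] = 2a. -/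
/-- The central involution `i = -I` of `SL₂(K)`. -/
def ii (K : Type*) [Field K] : Matrix.SpecialLinearGroup (Fin 2) K :=
  ⟨!![-1, 0; 0, -1], by simp [Matrix.det_fin_two_of]⟩

/-!
For `a ∈ L` write `u • w • a = w • a + c + ℓ`. The braid relation `u w u = w u⁻¹ w` of `SL₂(K)`
computes `w • u⁻¹ • w • a` in two ways. Since `u` fixes `a`, it equals `u • w • a = ℓ + c + w • a`.
Since `u⁻¹ • c = c - [u, c]` (as `u` fixes `[u, c] ∈ L`) and `w² = i` acts trivially, it also equals
`a - w • c + w • ([u, c] - ℓ)`. Comparing components in `L ⊕ C ⊕ w • L` gives `ℓ = a`,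
`w • c = -c` and `[u, c] = ℓ + a = 2 a`; injectivity of `c` follows as `V` has no `2`-torsion.
-/

section SL2

variable {K : Type*} [Field K]

theorem uu_mul_uu (s t : K) : uu K s * uu K t = uu K (s + t) := by
  refine Subtype.ext ?_
  simp only [Matrix.SpecialLinearGroup.coe_mul]
  simp [uu, add_comm]

theorem uu_inv (t : K) : (uu K t)⁻¹ = uu K (-t)  := by
  rw [inv_eq_iff_mul_eq_one, uu_mul_uu, add_neg_cancel]
  refine Subtype.ext ?_
  simp [uu, Matrix.one_fin_two]

theorem ww_mul_ww : ww K * ww K = ii K := by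
  refine Subtype.ext ?_
  simp only [Matrix.SpecialLinearGroup.coe_mul]
  simp [ww, ii]

theorem uu_one_mul_ww_mul_uu_one : uu K 1 * ww K * uu K 1 = ww K * (uu K 1)⁻¹ * ww K := by
  rw [uu_inv]
  refine Subtype.ext ?_
  simp only [Matrix.SpecialLinearGroup.coe_mul]
  simp [uu, ww]

end SL2

section Decomposition

variable {G V : Type*} [Group G] [AddCommGroup V] [DistribMulAction G V]
  {L C : AddSubgroup V} {u w : G}

variable (L C) in
def IsDirectSumSMul (w : G) : Prop :=
  ∀ a c b : V, a ∈ L → c ∈ C → b ∈ L → a + c + w • b = 0 → a = 0 ∧ c = 0 ∧ b = 0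

theorem eq_of_add_add_smul_eq (hL : IsDirectSumSMul L C w)
    {a c b a' c' b' : V} (ha : a ∈ L) (hc : c ∈ C) (hb : b ∈ L)
    (ha' : a' ∈ L) (hc' : c' ∈ C) (hb' : b' ∈ L)
    (h : a + c + w • b = a' + c' + w • b') : a = a' ∧ c = c' ∧ b = b' := by
  have hsub : (a - a') + (c - c') + w • (b - b') = 0 := by
    rw [smul_sub, ← sub_eq_zero.mpr h]
    abel
  simpa only [sub_eq_zero] using
    hL _ _ _ (L.sub_mem ha ha') (C.sub_mem hc hc') (L.sub_mem hb hb') hsub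

theorem eq_of_smul_smul_eq_add_add (hL : IsDirectSumSMul L C w)
    {a c ℓ c' ℓ' : V} (ha : a ∈ L) (hc : c ∈ C) (hℓ : ℓ ∈ L) (hc' : c' ∈ C) (hℓ' : ℓ' ∈ L)
    (h : u • w • a = w • a + c + ℓ) (h' : u • w • a = w • a + c' + ℓ') :
    c = c' ∧ ℓ = ℓ' := by
  have : ℓ + c + w • a = ℓ' + c' + w • a :=
    calc ℓ + c + w • a = w • a + c + ℓ := by abel
      _ = w • a + c' + ℓ' := h.symm.trans h'
      _ = ℓ' + c' + w • a := by abel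
  obtain ⟨hℓℓ', hcc', -⟩ := eq_of_add_add_smul_eq hL hℓ hc ha hℓ' hc' ha this
  exact ⟨hcc', hℓℓ'⟩

theorem eq_of_smul_smul_eq_of_braid (hbraid : u * w * u = w * u⁻¹ * w)
    (hw : ∀ v : V, (w * w) • v = v) (hL : IsDirectSumSMul L C w)
    (hufix : ∀ a ∈ L, u • a = a) (hwC : ∀ c ∈ C, w • c ∈ C) (huC : ∀ c ∈ C, u • c - c ∈ L)
    {a c ℓ : V} (ha : a ∈ L) (hc : c ∈ C) (hℓ : ℓ ∈ L) (h : u • w • a = w • a + c + ℓ) :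
    ℓ = a ∧ w • c = -c ∧ u • c - c = 2 • a := by
  have hinvfix : ∀ b ∈ L, u⁻¹ • b = b := fun b hb => inv_smul_eq_iff.mpr (hufix b hb).symm
  set d := u • c - c with hd
  clear_value d
  have hdL : d ∈ L := hd ▸ huC c hc
  have hinvc : u⁻¹ • c = c - d := by
    rw [inv_smul_eq_iff, smul_sub, hufix d hdL, hd]
    abel
  have hinvwa : u⁻¹ • w • a = w • a - c + d - ℓ :=
    calc u⁻¹ • w • a = u⁻¹ • (u • w • a - ℓ - c) := by
          rw [h, add_sub_cancel_right, add_sub_cancel_right]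
      _ = w • a - ℓ - (c - d) := by rw [smul_sub, smul_sub, inv_smul_smul, hinvc, hinvfix ℓ hℓ]
      _ = w • a - c + d - ℓ := by abel
  have hbraid_a : w • u⁻¹ • w • a = w • a + c + ℓ := by
    rw [← mul_smul, ← mul_smul, ← hbraid, mul_smul, mul_smul, hufix a ha, h]
  have hdirect : w • u⁻¹ • w • a = a + -(w • c) + w • (d - ℓ) := by
    simp only [hinvwa, smul_sub, smul_add, ← mul_smul, hw]
    abel
  obtain ⟨haℓ, hwc, hdℓ⟩ := eq_of_add_add_smul_eq hL ha (C.neg_mem (hwC c hc))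
    (L.sub_mem hdL hℓ) hℓ hc ha (by rw [← hdirect, hbraid_a]; abel)
  refine ⟨haℓ.symm, neg_eq_iff_eq_neg.mp hwc, ?_⟩
  rw [sub_eq_iff_eq_add.mp hdℓ, ← haℓ, two_smul]

end Decomposition

theorem stmt14_general {K : Type*} [Field K] {V : Type*} [AddCommGroup V]
    [DistribMulAction (Matrix.SpecialLinearGroup (Fin 2) K) V]
    (htf : ∀ v : V, 2 • v = 0 → v = 0)
    (hi : ∀ v : V, ii K • v = v)
    (L C : AddSubgroup V)
    (huniq : ∀ a c b : V, a ∈ L → c ∈ C → b ∈ L →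
      a + c + ww K • b = 0 → a = 0 ∧ c = 0 ∧ b = 0)
    (hufix : ∀ a ∈ L, uu K 1 • a = a)
    (hwC : ∀ v : V, ww K • v ∈ C ↔ v ∈ C)
    (huC : ∀ c' ∈ C, uu K 1 • c' - c' ∈ L)
    (huV : ∀ v : V, ∃ a ∈ L, ∃ c' ∈ C, uu K 1 • v - v = a + c') :
    ∃ c ℓ : V → V,
      (∀ a ∈ L, c a ∈ C ∧ ℓ a ∈ L ∧
        uu K 1 • (ww K • a) = ww K • a + c a + ℓ a) ∧
      (∀ a ∈ L, ∀ c' ℓ' : V, c' ∈ C → ℓ' ∈ L →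
        uu K 1 • (ww K • a) = ww K • a + c' + ℓ' → c' = c a ∧ ℓ' = ℓ a) ∧
      (∀ a b : V, a ∈ L → b ∈ L →
        c (a + b) = c a + c b ∧ ℓ (a + b) = ℓ a + ℓ b) ∧
      (∀ a ∈ L, ℓ a = a) ∧
      (∀ a ∈ L, ww K • c a = - c a) ∧
      (∀ a ∈ L, c a = 0 → a = 0) ∧
      (∀ a ∈ L, uu K 1 • c a - c a = 2 • a) := by
  choose ℓ hℓ c hc hu using huV
  have hdecomp (a : V) :
      uu K 1 • ww K • a = ww K • a + c (ww K • a) + ℓ (ww K • a) := by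
    rw [add_assoc, add_comm (c _), ← hu, add_sub_cancel]
  have hkey {a : V} (ha : a ∈ L) := eq_of_smul_smul_eq_of_braid uu_one_mul_ww_mul_uu_one
    (fun v => by rw [ww_mul_ww, hi]) huniq hufix (fun c' => (hwC c').mpr) huC ha (hc _) (hℓ _)
    (hdecomp a)
  refine ⟨fun a => c (ww K • a), fun a => ℓ (ww K • a), fun a _ => ⟨hc _, hℓ _, hdecomp a⟩,
    ?_, ?_, fun a ha => (hkey ha).1, fun a ha => (hkey ha).2.1, ?_, fun a ha => (hkey ha).2.2⟩
  · intro a ha c' ℓ' hc' hℓ' h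
    exact (eq_of_smul_smul_eq_add_add huniq ha (hc _) (hℓ _) hc' hℓ' (hdecomp a) h).imp
      Eq.symm Eq.symm
  · intro a b ha hb
    have hadd : uu K 1 • ww K • (a + b) = ww K • (a + b) + (c (ww K • a) + c (ww K • b)) +
        (ℓ (ww K • a) + ℓ (ww K • b)) := by
      rw [smul_add, smul_add, hdecomp a, hdecomp b]
      abel
    exact eq_of_smul_smul_eq_add_add huniq (L.add_mem ha hb) (hc _) (hℓ _)
      (C.add_mem (hc _) (hc _)) (L.add_mem (hℓ _) (hℓ _)) (hdecomp (a + b)) hadd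
  · intro a ha hca
    dsimp only at hca
    apply htf a
    rw [← (hkey ha).2.2, hca, smul_zero, sub_zero]

/-- Let `V` be a `G = SL₂(K)`-module with no `2`-torsion on which
the central involution `i = -I` acts trivially, and suppose `V = L ⊕ C ⊕ w·L` is an
internal direct sum of subgroups with: `u = u₁` fixing `L` pointwise, `w·C = C`,
`[u, C] ⊆ L` and `[u, V] ⊆ L ⊕ C`.  Writing `u • (w • a) = w • a + c a + ℓ a`
(`c a ∈ C`, `ℓ a ∈ L`) for `a ∈ L` — this decomposition exists, is unique, and `c`,
`ℓ` are additive — one has `ℓ a = a`, `w • c a = - c a`, `c` is injective, and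
`[u, c a] = 2 a` for all `a ∈ L`. -/
theorem stmt14 {K : Type*} [Field K] {V : Type*} [AddCommGroup V]
    [DistribMulAction (Matrix.SpecialLinearGroup (Fin 2) K) V]
    (htf : ∀ v : V, 2 • v = 0 → v = 0)
    (hi : ∀ v : V, ii K • v = v)
    (L C : AddSubgroup V)
    (hdec : ∀ v : V, ∃ a ∈ L, ∃ c ∈ C, ∃ b ∈ L, v = a + c + ww K • b)
    (huniq : ∀ a c b : V, a ∈ L → c ∈ C → b ∈ L →
      a + c + ww K • b = 0 → a = 0 ∧ c = 0 ∧ b = 0)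
    (hufix : ∀ a ∈ L, uu K 1 • a = a)
    (hwC : ∀ v : V, ww K • v ∈ C ↔ v ∈ C)
    (huC : ∀ c' ∈ C, uu K 1 • c' - c' ∈ L)
    (huV : ∀ v : V, ∃ a ∈ L, ∃ c' ∈ C, uu K 1 • v - v = a + c') :
    ∃ c ℓ : V → V,
      (∀ a ∈ L, c a ∈ C ∧ ℓ a ∈ L ∧
        uu K 1 • (ww K • a) = ww K • a + c a + ℓ a) ∧
      (∀ a ∈ L, ∀ c' ℓ' : V, c' ∈ C → ℓ' ∈ L →
        uu K 1 • (ww K • a) = ww K • a + c' + ℓ' → c' = c a ∧ ℓ' = ℓ a) ∧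
      (∀ a b : V, a ∈ L → b ∈ L →
        c (a + b) = c a + c b ∧ ℓ (a + b) = ℓ a + ℓ b) ∧
      (∀ a ∈ L, ℓ a = a) ∧
      (∀ a ∈ L, ww K • c a = - c a) ∧
      (∀ a ∈ L, c a = 0 → a = 0) ∧
      (∀ a ∈ L, uu K 1 • c a - c a = 2 • a) :=
  stmt14_general htf hi L C huniq hufix hwC huC huV
end

section
/- Let K be a field, G = SL₂(K), and V a G-module with no 2-torsion (2v = 0 implies v = 0) on which the central involution i = −I acts trivially. Suppose V = A ⊕ B ⊕ w·B ⊕ w·A is an internal direct sum of subgroups such that: u fixes A pointwise; [u, b] ∈ A for all b ∈ B; [u, b'] ∈ A ⊕ B for all b' ∈ w·B; and [u, v] ∈ A ⊕ B ⊕ w·B for all v ∈ V. Then there is a unique additive map β : A → B such that u·(w·a) = w·a − w·β(a) + β(a) + a for all a ∈ A; it satisfies [u, β(a)] = a and [u, w·β(a)] = −a for all a ∈ A; in particular β is injective and the map b ↦ [u, b] restricted to B is a surjection onto A with β as a section. -/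
lemma ww_sq (K : Type*) [Field K] : ww K * ww K = ii K := by
  apply Subtype.ext
  show (ww K).1 * (ww K).1 = (ii K).1
  simp [ww, ii, Matrix.mul_fin_two]

lemma uwuwu_rel (K : Type*) [Field K] :
    uu K 1 * ww K * uu K 1 * ww K * uu K 1 = ii K * ww K := by
  apply Subtype.ext
  show (uu K 1).1 * (ww K).1 * (uu K 1).1 * (ww K).1 * (uu K 1).1 = (ii K).1 * (ww K).1
  simp [uu, ww, ii, Matrix.mul_fin_two]

/-- Let `V` be a `G = SL₂(K)`-module with no `2`-torsion on which
the central involution `i = -I` acts trivially, and suppose `V = A ⊕ B ⊕ w·B ⊕ w·A`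
is an internal direct sum of subgroups with: `u = u₁` fixing `A` pointwise,
`[u, B] ⊆ A`, `[u, w·B] ⊆ A ⊕ B` and `[u, V] ⊆ A ⊕ B ⊕ w·B`.  Then there is a unique
additive map `β : A → B` with `u • (w • a) = w • a - w • β a + β a + a` for all
`a ∈ A`; it satisfies `[u, β a] = a` and `[u, w • β a] = -a`; in particular `β` is
injective and `b ↦ [u, b]` restricted to `B` surjects onto `A` with `β` as a
section. -/
theorem stmt16 {K : Type*} [Field K] {V : Type*} [AddCommGroup V]
    [DistribMulAction (Matrix.SpecialLinearGroup (Fin 2) K) V]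
    (htf : ∀ v : V, 2 • v = 0 → v = 0)
    (hi : ∀ v : V, ii K • v = v)
    (A B : AddSubgroup V)
    (hdec : ∀ v : V, ∃ a ∈ A, ∃ b ∈ B, ∃ b' ∈ B, ∃ a' ∈ A,
      v = a + b + ww K • b' + ww K • a')
    (huniq : ∀ a b b' a' : V, a ∈ A → b ∈ B → b' ∈ B → a' ∈ A →
      a + b + ww K • b' + ww K • a' = 0 → a = 0 ∧ b = 0 ∧ b' = 0 ∧ a' = 0)
    (hufix : ∀ a ∈ A, uu K 1 • a = a)
    (huB : ∀ b ∈ B, uu K 1 • b - b ∈ A)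
    (huwB : ∀ b ∈ B, ∃ a ∈ A, ∃ b'' ∈ B,
      uu K 1 • (ww K • b) - ww K • b = a + b'')
    (huV : ∀ v : V, ∃ a ∈ A, ∃ b ∈ B, ∃ b' ∈ B,
      uu K 1 • v - v = a + b + ww K • b') :
    ∃ β : V → V,
      (∀ a ∈ A, β a ∈ B ∧
        uu K 1 • (ww K • a) = ww K • a - ww K • β a + β a + a) ∧
      (∀ a a' : V, a ∈ A → a' ∈ A → β (a + a') = β a + β a') ∧
      (∀ a ∈ A, ∀ b ∈ B,
        uu K 1 • (ww K • a) = ww K • a - ww K • b + b + a → b = β a) ∧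
      (∀ a ∈ A, uu K 1 • β a - β a = a) ∧
      (∀ a ∈ A, uu K 1 • (ww K • β a) - ww K • β a = -a) ∧
      (∀ a a' : V, a ∈ A → a' ∈ A → β a = β a' → a = a') ∧
      (∀ a ∈ A, ∃ b ∈ B, uu K 1 • b - b = a) := by
  classical
  set u := uu K 1 with hu
  set w := ww K with hwdef
  have hW2 : ∀ v : V, w • w • v = v := by
    intro v; rw [← mul_smul, hwdef, ww_sq, hi]
  have hR : ∀ v : V, u • w • u • w • u • v = w • v := by
    intro v
    calc u • w • u • w • u • v = (u * w * u * w * u) • v := by simp only [mul_smul]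
      _ = (ii K * w) • v := by rw [hu, hwdef, uwuwu_rel]
      _ = w • v := by rw [mul_smul, hi]
  have hRA : ∀ x ∈ A, u • w • u • w • x = w • x := by
    intro x hx
    have h := hR x
    rwa [hufix x hx] at h
  -- uniqueness of components
  have comp : ∀ x₁ y₁ z₁ t₁ x₂ y₂ z₂ t₂ : V, x₁ ∈ A → y₁ ∈ B → z₁ ∈ B → t₁ ∈ A →
      x₂ ∈ A → y₂ ∈ B → z₂ ∈ B → t₂ ∈ A →
      x₁ + y₁ + w • z₁ + w • t₁ = x₂ + y₂ + w • z₂ + w • t₂ →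
      x₁ = x₂ ∧ y₁ = y₂ ∧ z₁ = z₂ ∧ t₁ = t₂ := by
    intro x₁ y₁ z₁ t₁ x₂ y₂ z₂ t₂ hx₁ hy₁ hz₁ ht₁ hx₂ hy₂ hz₂ ht₂ heq
    have h0 : (x₁ - x₂) + (y₁ - y₂) + w • (z₁ - z₂) + w • (t₁ - t₂) = 0 := by
      rw [smul_sub, smul_sub]
      have e : (x₁ - x₂) + (y₁ - y₂) + (w • z₁ - w • z₂) + (w • t₁ - w • t₂)
          = (x₁ + y₁ + w • z₁ + w • t₁) - (x₂ + y₂ + w • z₂ + w • t₂) := by abel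
      rw [e, heq, sub_self]
    obtain ⟨e1, e2, e3, e4⟩ := huniq _ _ _ _ (sub_mem hx₁ hx₂) (sub_mem hy₁ hy₂)
      (sub_mem hz₁ hz₂) (sub_mem ht₁ ht₂) h0
    exact ⟨sub_eq_zero.mp e1, sub_eq_zero.mp e2, sub_eq_zero.mp e3, sub_eq_zero.mp e4⟩
  -- Step 1
  have step1 : ∀ a ∈ A, ∃ b ∈ B, (u • w • a = w • a + (a + b + w • (-b))) ∧
      ∃ ab ∈ A, (u • w • b = w • b + ab) ∧ a + a + ab - (u • b - b) = 0 := by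
    intro a ha
    obtain ⟨α, hα, b, hb, c, hc, h1⟩ := huV (w • a)
    obtain ⟨α₁, hα₁, b₁, hb₁, c₁, hc₁, h2⟩ := huV (w • α)
    obtain ⟨ab, hab, bb, hbb, h3⟩ := huwB b hb
    have hγ : u • c - c ∈ A := huB c hc
    have h1' : u • w • a = w • a + (α + b + w • c) := by rw [← h1]; abel
    have h2' : u • w • α = w • α + (α₁ + b₁ + w • c₁) := by rw [← h2]; abel
    have h3' : u • w • b = w • b + (ab + bb) := by rw [← h3]; abel
    have s1 : w • u • w • a = a + (w • α + w • b + c) := by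
      rw [h1', smul_add, smul_add, smul_add, hW2, hW2]
    have s2 : u • w • u • w • a = w • a := hRA a ha
    rw [s1] at s2
    simp only [smul_add] at s2
    rw [hufix a ha, h2', h3'] at s2
    have hE : (a + α₁ + ab + (u • c - c)) + (b₁ + bb + c) + w • (c₁ + b) + w • α
        = 0 + 0 + w • (0 : V) + w • a := by
      rw [smul_zero, smul_add, ← s2]
      abel
    obtain ⟨e1, e2, e3, e4⟩ := comp _ _ _ _ _ _ _ _
      (add_mem (add_mem (add_mem ha hα₁) hab) hγ)
      (add_mem (add_mem hb₁ hbb) hc) (add_mem hc₁ hb) hα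
      (zero_mem A) (zero_mem B) (zero_mem B) ha hE
    -- e4 : α = a
    rw [e4] at h2
    have hcc : α + b + w • c + w • (0 : V) = α₁ + b₁ + w • c₁ + w • (0 : V) := by
      rw [smul_zero, add_zero, add_zero, ← h1, ← h2]
    obtain ⟨eα, eb, ec, -⟩ := comp _ _ _ _ _ _ _ _
      hα hb hc (zero_mem A) hα₁ hb₁ hc₁ (zero_mem A) hcc
    rw [← ec] at e3
    have hc' : c = -b := by rwa [add_eq_zero_iff_eq_neg] at e3
    rw [← eb, hc'] at e2
    have hbb0 : bb = 0 := by rw [← e2]; abel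
    rw [e4, hc'] at h1'
    rw [hbb0, add_zero] at h3'
    refine ⟨b, hb, h1', ab, hab, h3', ?_⟩
    rw [← eα, e4, hc', smul_neg] at e1
    rw [← e1]; abel
  -- Step 2
  have key : ∀ a ∈ A, ∃ b ∈ B, (u • w • a = w • a + (a + b + w • (-b))) ∧
      u • b - b = a ∧ u • w • b - w • b = -a := by
    intro a ha
    obtain ⟨b, hb, hdecA, ab, hab, h3', hsum⟩ := step1 a ha
    have ht : u • b - b ∈ A := huB b hb
    obtain ⟨b', hb', hdec2, -⟩ := step1 ab hab
    have hub : u • b = b + (u • b - b) := by abel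
    set t := u • b - b with htdef
    have hRb : u • w • u • w • b = w • b - w • t := by
      have h := hR b
      rw [hub] at h
      simp only [smul_add] at h
      rw [hRA t ht] at h
      exact eq_sub_of_add_eq h
    have l2 : w • u • w • b = b + w • ab := by
      rw [h3', smul_add, hW2]
    have l3 : u • w • u • w • b = (b + t) + (w • ab + (ab + b' + w • (-b'))) := by
      rw [l2, smul_add, hub, hdec2]
    have E : (b + t) + (w • ab + (ab + b' + w • (-b'))) = w • b + w • (-t) := by
      rw [← l3, hRb, sub_eq_add_neg, ← smul_neg]
    have hE2 : (t + ab) + (b + b') + w • (-b') + w • ab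
        = 0 + 0 + w • b + w • (-t) := by
      calc (t + ab) + (b + b') + w • (-b') + w • ab
          = (b + t) + (w • ab + (ab + b' + w • (-b'))) := by abel
        _ = w • b + w • (-t) := E
        _ = 0 + 0 + w • b + w • (-t) := by abel
    obtain ⟨f1, -, -, -⟩ := comp _ _ _ _ _ _ _ _
      (add_mem ht hab) (add_mem hb hb') (neg_mem hb') hab
      (zero_mem A) (zero_mem B) hb (neg_mem ht) hE2
    have habt : ab = -t := by
      rw [← add_eq_zero_iff_eq_neg, add_comm]
      exact f1
    have h2a : (2 : ℕ) • (a - t) = 0 := by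
      rw [two_nsmul]
      rw [habt] at hsum
      rw [← hsum]; abel
    have hat : a = t := sub_eq_zero.mp (htf _ h2a)
    refine ⟨b, hb, hdecA, ?_, ?_⟩
    · rw [← htdef]; exact hat.symm
    · rw [h3', habt, hat]; abel
  -- uniqueness of b
  have buniq : ∀ a ∈ A, ∀ b ∈ B, ∀ b'' ∈ B,
      u • w • a = w • a - w • b + b + a → u • w • a = w • a - w • b'' + b'' + a →
      b = b'' := by
    intro a ha b hb b'' hb'' h h'
    have heq : a + b + w • (-b) + w • a = a + b'' + w • (-b'') + w • a := by
      have e0 : w • a - w • b + b + a = w • a - w • b'' + b'' + a := by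
        rw [← h, ← h']
      calc a + b + w • (-b) + w • a = w • a - w • b + b + a := by
            rw [smul_neg]; abel
        _ = w • a - w • b'' + b'' + a := e0
        _ = a + b'' + w • (-b'') + w • a := by rw [smul_neg]; abel
    exact neg_inj.mp (comp _ _ _ _ _ _ _ _ ha hb (neg_mem hb) ha
      ha hb'' (neg_mem hb'') ha heq).2.2.1
  -- define β by choice
  have key' : ∀ a : V, ∃ b : V, a ∈ A → b ∈ B ∧
      (u • w • a = w • a + (a + b + w • (-b))) ∧
      u • b - b = a ∧ u • w • b - w • b = -a := by
    intro a
    by_cases ha : a ∈ A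
    · obtain ⟨b, hb, h1, h2, h3⟩ := key a ha
      exact ⟨b, fun _ => ⟨hb, h1, h2, h3⟩⟩
    · exact ⟨0, fun h => absurd h ha⟩
  choose βf hβ using key'
  have hβB : ∀ a ∈ A, βf a ∈ B := fun a ha => (hβ a ha).1
  have hβu : ∀ a ∈ A, u • βf a - βf a = a := fun a ha => (hβ a ha).2.2.1
  have hβw : ∀ a ∈ A, u • w • βf a - w • βf a = -a := fun a ha => (hβ a ha).2.2.2
  have hβeq : ∀ a ∈ A, u • w • a = w • a - w • βf a + βf a + a := by
    intro a ha
    rw [(hβ a ha).2.1, smul_neg]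
    abel
  have char : ∀ a ∈ A, ∀ b ∈ B, u • w • a = w • a - w • b + b + a → b = βf a := by
    intro a ha b hb h
    exact buniq a ha b hb (βf a) (hβB a ha) h (hβeq a ha)
  refine ⟨βf, fun a ha => ⟨hβB a ha, hβeq a ha⟩, ?_, char, hβu, hβw, ?_, ?_⟩
  · -- additivity
    intro a a' ha ha'
    refine (char (a + a') (add_mem ha ha') (βf a + βf a')
      (add_mem (hβB a ha) (hβB a' ha')) ?_).symm
    have e1 : w • (a + a') = w • a + w • a' := smul_add _ _ _
    rw [e1, smul_add, hβeq a ha, hβeq a' ha', smul_add]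
    abel
  · -- injectivity
    intro a a' ha ha' h
    rw [← hβu a ha, ← hβu a' ha', h]
  · -- section
    exact fun a ha => ⟨βf a, hβB a ha, hβu a ha⟩
end
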